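/- Let k be a field of characteristic 0, Γ a linearly ordered abelian group, γ ∈ Γ with γ > 0, and ρ ∈ k. In the Hahn series field L = l((X^Γ)) over l = k((T^ℚ)), the map σ defined on monomials by σ(a T^q X^g) = a T^q X^g · exp(q ρ X^γ) and extended by linearity and continuity is a ring automorphism of L. Moreover, for every x ∈ L with v(x) ≥ 0 one has v(x − σ(x)) ≥ v(x) + γ. -/

import Mathlib

open Finset
set_option linter.unusedSectionVars false

namespace Stmt3Aux

variable {k : Type*} [Field k] [CharZero k] {Γ : Type*} [AddCommGroup Γ] [LinearOrder Γ] [IsOrderedAddMonoid Γ]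

noncomputable def cc (ρ : k) (n : ℕ) (q : ℚ) : k := (q • ρ) ^ n / (n.factorial : k)

lemma cc_zero (ρ : k) (q : ℚ) : cc ρ 0 q = 1 := by simp [cc]

lemma expAux (a b : k) (N : ℕ) :
    (a + b) ^ N / (N.factorial : k) =
      ∑ i ∈ Finset.range (N + 1), (a ^ i / (i.factorial : k)) *
        (b ^ (N - i) / ((N - i).factorial : k)) := by
  rw [Commute.add_pow (Commute.all a b), Finset.sum_div]
  refine Finset.sum_congr rfl fun i hi => ?_
  have hiN : i ≤ N := Nat.lt_succ_iff.mp (Finset.mem_range.mp hi)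
  have hfact : (N.factorial : k) = (N.choose i : k) * (i.factorial : k) * ((N - i).factorial : k) := by
    exact_mod_cast congrArg (Nat.cast : ℕ → k) (Nat.choose_mul_factorial_mul_factorial hiN).symm
  have h1 : (i.factorial : k) ≠ 0 := Nat.cast_ne_zero.mpr (Nat.factorial_ne_zero i)
  have h2 : ((N - i).factorial : k) ≠ 0 := Nat.cast_ne_zero.mpr (Nat.factorial_ne_zero (N - i))
  have h3 : (N.choose i : k) ≠ 0 := Nat.cast_ne_zero.mpr (Nat.choose_pos hiN).ne'
  rw [hfact]
  field_simp

lemma cc_add (ρ : k) (N : ℕ) (q q' : ℚ) :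
    cc ρ N (q + q') = ∑ i ∈ Finset.range (N + 1), cc ρ i q * cc ρ (N - i) q' := by
  simp only [cc, add_smul]
  exact expAux _ _ N

lemma cc_binom (ρ ρ' : k) (N : ℕ) (q : ℚ) :
    ∑ i ∈ Finset.range (N + 1), cc ρ i q * cc ρ' (N - i) q = cc (ρ + ρ') N q := by
  simp only [cc, smul_add]
  exact (expAux _ _ N).symm

lemma cc_zero_left (n : ℕ) (hn : n ≠ 0) (q : ℚ) : cc (0 : k) n q = 0 := by
  simp [cc, zero_pow hn]

end Stmt3Aux

namespace Stmt3Aux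

variable {k : Type*} [Field k] [CharZero k] {Γ : Type*} [AddCommGroup Γ] [LinearOrder Γ] [IsOrderedAddMonoid Γ]

/-- coefficient extraction as an `AddMonoidHom`. -/
def coeffHom {Γ' R' : Type*} [PartialOrder Γ'] [AddCommMonoid R'] (g : Γ') :
    HahnSeries Γ' R' →+ R' where
  toFun x := x.coeff g
  map_zero' := rfl
  map_add' _ _ := HahnSeries.coeff_add

@[simp] lemma coeffHom_apply {Γ' R' : Type*} [PartialOrder Γ'] [AddCommMonoid R'] (g : Γ')
    (x : HahnSeries Γ' R') : coeffHom g x = x.coeff g := rfl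

lemma coeff_sum {Γ' R' α : Type*} [PartialOrder Γ'] [AddCommMonoid R'] (g : Γ')
    (s : Finset α) (f : α → HahnSeries Γ' R') :
    (∑ i ∈ s, f i).coeff g = ∑ i ∈ s, (f i).coeff g :=
  map_sum (coeffHom g) f s

/-- Hahn series product coefficient as a sum over an enlarged antidiagonal. -/
lemma mul_coeff_enlarged {Γ' R' : Type*} [AddCommMonoid Γ'] [LinearOrder Γ'] [IsOrderedCancelAddMonoid Γ']
    [NonUnitalNonAssocSemiring R'] {x y : HahnSeries Γ' R'} {sx sy : Set Γ'}
    (hsx : sx.IsPWO) (hsy : sy.IsPWO) (hx : x.support ⊆ sx) (hy : y.support ⊆ sy) (a : Γ') :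
    (x * y).coeff a = ∑ ij ∈ Finset.antidiagonal hsx hsy a, x.coeff ij.1 * y.coeff ij.2 := by
  rw [HahnSeries.coeff_mul_left' hsx hx]
  refine Finset.sum_subset (fun ij hij => ?_) (fun ij hij hij' => ?_)
  · rw [Finset.mem_antidiagonal] at hij ⊢
    exact ⟨hij.1, hy hij.2.1, hij.2.2⟩
  · rw [Finset.mem_antidiagonal] at hij hij'
    push_neg at hij'
    have h2 : ij.2 ∉ y.support := fun hc => hij' hij.1 hc hij.2.2
    rw [HahnSeries.mem_support, not_not] at h2
    rw [h2, mul_zero]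

noncomputable def phi (ρ : k) (n : ℕ) (r : HahnSeries ℚ k) : HahnSeries ℚ k where
  coeff q := cc ρ n q * r.coeff q
  isPWO_support' := r.isPWO_support.mono (fun q hq => by
    simp only [Function.mem_support] at hq ⊢
    exact right_ne_zero_of_mul hq)

@[simp] lemma phi_coeff (ρ : k) (n : ℕ) (r : HahnSeries ℚ k) (q : ℚ) :
    (phi ρ n r).coeff q = cc ρ n q * r.coeff q := rfl

lemma phi_support_subset (ρ : k) (n : ℕ) (r : HahnSeries ℚ k) :
    (phi ρ n r).support ⊆ r.support := fun q hq => by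
  simp only [HahnSeries.mem_support, phi_coeff] at hq ⊢
  exact right_ne_zero_of_mul hq

lemma phi_add (ρ : k) (n : ℕ) (r s : HahnSeries ℚ k) :
    phi ρ n (r + s) = phi ρ n r + phi ρ n s := by
  apply HahnSeries.coeff_injective; funext q
  simp [mul_add]

/-- `phi` as an `AddMonoidHom`. -/
noncomputable def phiHom (ρ : k) (n : ℕ) : HahnSeries ℚ k →+ HahnSeries ℚ k where
  toFun := phi ρ n
  map_zero' := by apply HahnSeries.coeff_injective; funext q; simp
  map_add' := phi_add ρ n

@[simp] lemma phiHom_apply (ρ : k) (n : ℕ) (r : HahnSeries ℚ k) : phiHom ρ n r = phi ρ n r := rfl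

@[simp] lemma phi_zero (ρ : k) (n : ℕ) : phi ρ n (0 : HahnSeries ℚ k) = 0 :=
  map_zero (phiHom ρ n)

@[simp] lemma phi_zero_idx (ρ : k) (r : HahnSeries ℚ k) : phi ρ 0 r = r := by
  apply HahnSeries.coeff_injective; funext q
  simp [cc_zero]

lemma phi_rho_zero (n : ℕ) (hn : n ≠ 0) (r : HahnSeries ℚ k) : phi (0 : k) n r = 0 := by
  apply HahnSeries.coeff_injective; funext q
  simp [cc_zero_left n hn]

lemma phi_single (ρ : k) (n : ℕ) (q : ℚ) (a : k) :
    phi ρ n (HahnSeries.single q a) = HahnSeries.single q (cc ρ n q * a) := by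
  apply HahnSeries.coeff_injective; funext q'
  simp only [phi_coeff, HahnSeries.coeff_single]
  by_cases h : q' = q <;> simp [h]

lemma phi_sum_comp (ρ ρ' : k) (N : ℕ) (r : HahnSeries ℚ k) :
    ∑ i ∈ Finset.range (N + 1), phi ρ i (phi ρ' (N - i) r) = phi (ρ + ρ') N r := by
  apply HahnSeries.coeff_injective; funext q
  rw [coeff_sum]
  simp only [phi_coeff, ← mul_assoc]
  rw [← Finset.sum_mul, cc_binom]

lemma phi_mul (ρ : k) (n : ℕ) (r s : HahnSeries ℚ k) :
    phi ρ n (r * s) = ∑ i ∈ Finset.range (n + 1), phi ρ i r * phi ρ (n - i) s := by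
  apply HahnSeries.coeff_injective; funext q
  rw [coeff_sum, phi_coeff, HahnSeries.coeff_mul, Finset.mul_sum]
  have hterm : ∀ i, (phi ρ i r * phi ρ (n - i) s).coeff q =
      ∑ ij ∈ Finset.antidiagonal r.isPWO_support s.isPWO_support q,
        (cc ρ i ij.1 * r.coeff ij.1) * (cc ρ (n - i) ij.2 * s.coeff ij.2) := fun i =>
    mul_coeff_enlarged r.isPWO_support s.isPWO_support
      (phi_support_subset ρ i r) (phi_support_subset ρ (n - i) s) q
  simp only [hterm]
  rw [Finset.sum_comm]
  refine Finset.sum_congr rfl fun ij hij => ?_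
  rw [Finset.mem_antidiagonal] at hij
  rw [← hij.2.2, cc_add, Finset.sum_mul]
  refine Finset.sum_congr rfl fun i _ => ?_
  ring

end Stmt3Aux

namespace Stmt3Aux

variable {k : Type*} [Field k] [CharZero k] {Γ : Type*} [AddCommGroup Γ] [LinearOrder Γ] [IsOrderedAddMonoid Γ]

lemma nsmul_strictMono {γ : Γ} (hγ : 0 < γ) : StrictMono (fun n : ℕ => n • γ) :=
  fun _ _ h => nsmul_lt_nsmul_left hγ h

lemma isPWO_range_nsmul {γ : Γ} (hγ : 0 < γ) : (Set.range (fun n : ℕ => n • γ)).IsPWO := by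
  rw [← Set.image_univ]
  exact Set.IsPWO.image_of_monotone
    ((Set.isWF_univ_iff.2 ⟨wellFounded_lt⟩).isPWO) (nsmul_strictMono hγ).monotone

lemma finite_nsmul_mem {γ : Γ} (hγ : 0 < γ) {s : Set Γ} (hs : s.IsPWO) (g : Γ) :
    {n : ℕ | g - n • γ ∈ s}.Finite := by
  by_contra h
  rw [← Set.not_infinite, not_not] at h
  have hdesc : StrictAnti (fun i : ℕ => g - (Nat.nth (fun n => g - n • γ ∈ s) i) • γ) := by
    intro i j hij
    have h1 := (Nat.nth_lt_nth h).2 hij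
    exact sub_lt_sub_left (nsmul_strictMono hγ h1) g
  exact (Set.isWF_iff_no_descending_seq.1 hs.isWF) _ hdesc
    (fun i => Nat.nth_mem_of_infinite h i)

lemma pair_finite {S : Set ℕ} (hS : S.Finite) : {p : ℕ × ℕ | p.1 + p.2 ∈ S}.Finite := by
  refine Set.Finite.subset (hS.biUnion (fun N _ => (Finset.HasAntidiagonal.antidiagonal N).finite_toSet)) ?_
  intro p hp
  exact Set.mem_biUnion hp (Finset.HasAntidiagonal.mem_antidiagonal.2 rfl)

lemma diag_finsum {M : Type*} [AddCommMonoid M] (f : ℕ × ℕ → M)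
    (hf : (Function.support f).Finite) :
    ∑ᶠ p : ℕ × ℕ, f p = ∑ᶠ N : ℕ, ∑ i ∈ Finset.range (N + 1), f (i, N - i) := by
  classical
  set B : ℕ := (hf.toFinset.sup fun p => p.1 + p.2) + 1 with hB
  have hbound : ∀ p : ℕ × ℕ, f p ≠ 0 → p.1 + p.2 < B := fun p hp =>
    Nat.lt_succ_of_le (Finset.le_sup (f := fun p : ℕ × ℕ => p.1 + p.2) (hf.mem_toFinset.2 hp))
  have h1 : ∑ᶠ p : ℕ × ℕ, f p = ∑ p ∈ Finset.range B ×ˢ Finset.range B, f p := by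
    refine finsum_eq_sum_of_support_subset f ?_
    intro p hp
    have := hbound p hp
    simp only [Finset.coe_product, Set.mem_prod, Finset.mem_coe, Finset.mem_range]
    omega
  have h2 : ∑ᶠ N : ℕ, ∑ i ∈ Finset.range (N + 1), f (i, N - i) =
      ∑ N ∈ Finset.range B, ∑ i ∈ Finset.range (N + 1), f (i, N - i) := by
    refine finsum_eq_sum_of_support_subset _ ?_
    intro N hN
    simp only [Finset.mem_coe, Finset.mem_range]
    by_contra hNB
    push_neg at hNB
    apply hN
    refine Finset.sum_eq_zero fun i hi => ?_
    have hiN : i ≤ N := Nat.lt_succ_iff.mp (Finset.mem_range.mp hi)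
    by_contra hfi
    have := hbound _ hfi
    simp only at this
    omega
  rw [h1, h2]
  have h3 : ∀ N, ∑ i ∈ Finset.range (N + 1), f (i, N - i) =
      ∑ p ∈ Finset.HasAntidiagonal.antidiagonal N, f p := fun N =>
    (Finset.Nat.sum_antidiagonal_eq_sum_range_succ_mk f N).symm
  simp only [h3]
  rw [← Finset.sum_biUnion]
  · refine (Finset.sum_subset (fun p hp => ?_) (fun p hp hp' => ?_)).symm
    · simp only [Finset.mem_biUnion, Finset.mem_range] at hp
      obtain ⟨N, hNB, hpN⟩ := hp
      have := Finset.HasAntidiagonal.mem_antidiagonal.1 hpN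
      simp only [Finset.mem_product, Finset.mem_range]
      omega
    · by_contra hfp
      apply hp'
      simp only [Finset.mem_biUnion, Finset.mem_range]
      exact ⟨p.1 + p.2, hbound p hfp, Finset.HasAntidiagonal.mem_antidiagonal.2 rfl⟩
  · intro N _ M _ hNM
    simp only [Function.onFun]
    rw [Finset.disjoint_left]
    intro p hpN hpM
    exact hNM ((Finset.HasAntidiagonal.mem_antidiagonal.1 hpN).symm.trans (Finset.HasAntidiagonal.mem_antidiagonal.1 hpM))

end Stmt3Aux

namespace Stmt3Aux

variable {k : Type*} [Field k] [CharZero k] {Γ : Type*} [AddCommGroup Γ] [LinearOrder Γ] [IsOrderedAddMonoid Γ]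

/-- abbreviation for the big Hahn series field -/
abbrev L (k Γ : Type*) [Field k] [AddCommGroup Γ] [LinearOrder Γ] [IsOrderedAddMonoid Γ] :=
  HahnSeries Γ (HahnSeries ℚ k)

/-- coefficientwise application of `phi`. -/
noncomputable def Phi (ρ : k) (n : ℕ) (x : L k Γ) : L k Γ where
  coeff g := phi ρ n (x.coeff g)
  isPWO_support' := x.isPWO_support.mono (fun g hg => by
    simp only [Function.mem_support] at hg ⊢
    intro h
    rw [h] at hg
    exact hg (phi_zero ρ n))

@[simp] lemma Phi_coeff (ρ : k) (n : ℕ) (x : L k Γ) (g : Γ) :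
    (Phi ρ n x).coeff g = phi ρ n (x.coeff g) := rfl

lemma Phi_support_subset (ρ : k) (n : ℕ) (x : L k Γ) : (Phi ρ n x).support ⊆ x.support := by
  intro g hg
  simp only [HahnSeries.mem_support, Phi_coeff] at hg ⊢
  intro h
  rw [h] at hg
  exact hg (phi_zero ρ n)

lemma Phi_add (ρ : k) (n : ℕ) (x y : L k Γ) : Phi ρ n (x + y) = Phi ρ n x + Phi ρ n y := by
  apply HahnSeries.coeff_injective; funext g
  simp [phi_add]

lemma Phi_mul (ρ : k) (n : ℕ) (x y : L k Γ) :
    Phi ρ n (x * y) = ∑ i ∈ Finset.range (n + 1), Phi ρ i x * Phi ρ (n - i) y := by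
  apply HahnSeries.coeff_injective; funext g
  rw [coeff_sum, Phi_coeff, HahnSeries.coeff_mul]
  rw [show phi ρ n (∑ ij ∈ Finset.antidiagonal x.isPWO_support y.isPWO_support g,
      x.coeff ij.1 * y.coeff ij.2) = ∑ ij ∈ Finset.antidiagonal x.isPWO_support
      y.isPWO_support g, phi ρ n (x.coeff ij.1 * y.coeff ij.2) from
    map_sum (phiHom ρ n) _ _]
  have hterm : ∀ i, (Phi ρ i x * Phi ρ (n - i) y).coeff g =
      ∑ ij ∈ Finset.antidiagonal x.isPWO_support y.isPWO_support g,
        phi ρ i (x.coeff ij.1) * phi ρ (n - i) (y.coeff ij.2) := fun i =>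
    mul_coeff_enlarged x.isPWO_support y.isPWO_support
      (Phi_support_subset ρ i x) (Phi_support_subset ρ (n - i) y) g
  simp only [hterm]
  rw [Finset.sum_comm]
  exact Finset.sum_congr rfl fun ij _ => phi_mul ρ n _ _

end Stmt3Aux

namespace Stmt3Aux

variable {k : Type*} [Field k] [CharZero k] {Γ : Type*} [AddCommGroup Γ] [LinearOrder Γ] [IsOrderedAddMonoid Γ]

lemma singleShift_coeff (b : Γ) (y : L k Γ) (g : Γ) :
    (HahnSeries.single b (1 : HahnSeries ℚ k) * y).coeff g = y.coeff (g - b) := by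
  have h := HahnSeries.coeff_single_mul_add (r := (1 : HahnSeries ℚ k)) (x := y)
    (a := g - b) (b := b)
  rw [sub_add_cancel] at h
  rw [h, one_mul]

/-- The summable family of the twist. -/
noncomputable def Fam (ρ : k) {γ : Γ} (hγ : 0 < γ) (x : L k Γ) :
    HahnSeries.SummableFamily Γ (HahnSeries ℚ k) ℕ where
  toFun n := HahnSeries.single (n • γ) (1 : HahnSeries ℚ k) * Phi ρ n x
  isPWO_iUnion_support' := by
    refine (((isPWO_range_nsmul hγ).add x.isPWO_support)).mono ?_
    intro g hg
    rw [Set.mem_iUnion] at hg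
    obtain ⟨n, hn⟩ := hg
    rw [HahnSeries.mem_support, singleShift_coeff, Phi_coeff] at hn
    have hx : x.coeff (g - n • γ) ≠ 0 := fun h => hn (by rw [h]; exact phi_zero ρ n)
    rw [show g = n • γ + (g - n • γ) by abel]
    exact Set.add_mem_add (Set.mem_range_self n) hx
  finite_co_support' g := by
    refine (finite_nsmul_mem hγ x.isPWO_support g).subset ?_
    intro n hn
    simp only [Set.mem_setOf_eq] at hn ⊢
    rw [singleShift_coeff, Phi_coeff] at hn
    exact fun h => hn (by rw [h]; exact phi_zero ρ n)

@[simp] lemma Fam_apply (ρ : k) {γ : Γ} (hγ : 0 < γ) (x : L k Γ) (n : ℕ) :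
    Fam ρ hγ x n = HahnSeries.single (n • γ) (1 : HahnSeries ℚ k) * Phi ρ n x := rfl

/-- The twisting map. -/
noncomputable def sigma (ρ : k) {γ : Γ} (hγ : 0 < γ) (x : L k Γ) : L k Γ :=
  (Fam ρ hγ x).hsum

lemma sigma_coeff (ρ : k) {γ : Γ} (hγ : 0 < γ) (x : L k Γ) (g : Γ) :
    (sigma ρ hγ x).coeff g = ∑ᶠ n : ℕ, phi ρ n (x.coeff (g - n • γ)) := by
  rw [sigma, HahnSeries.SummableFamily.coeff_hsum]
  exact finsum_congr fun n => by rw [Fam_apply, singleShift_coeff, Phi_coeff]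

lemma sigma_co_support_finite (ρ : k) {γ : Γ} (hγ : 0 < γ) (x : L k Γ) (g : Γ) :
    (Function.support fun n : ℕ => phi ρ n (x.coeff (g - n • γ))).Finite := by
  refine (finite_nsmul_mem hγ x.isPWO_support g).subset ?_
  intro n hn
  simp only [Function.mem_support] at hn
  exact fun h => hn (by rw [h]; exact phi_zero ρ n)

lemma sigma_add (ρ : k) {γ : Γ} (hγ : 0 < γ) (x y : L k Γ) :
    sigma ρ hγ (x + y) = sigma ρ hγ x + sigma ρ hγ y := by
  rw [sigma, sigma, sigma, ← HahnSeries.SummableFamily.hsum_add]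
  congr 1
  refine HahnSeries.SummableFamily.ext fun n => ?_
  rw [HahnSeries.SummableFamily.add_apply, Fam_apply, Fam_apply, Fam_apply, Phi_add]
  exact Distrib.left_distrib (HahnSeries.single (n • γ) (1 : HahnSeries ℚ k)) (Phi ρ n x)
    (Phi ρ n y)

lemma sigma_zero_rho {γ : Γ} (hγ : 0 < γ) (x : L k Γ) : sigma (0 : k) hγ x = x := by
  apply HahnSeries.coeff_injective; funext g
  rw [sigma_coeff]
  rw [finsum_eq_single _ 0 (fun n hn => by rw [phi_rho_zero n hn])]
  rw [zero_nsmul, sub_zero, phi_zero_idx]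

end Stmt3Aux

namespace Stmt3Aux

variable {k : Type*} [Field k] [CharZero k] {Γ : Type*} [AddCommGroup Γ] [LinearOrder Γ] [IsOrderedAddMonoid Γ]

lemma sigma_mul (ρ : k) {γ : Γ} (hγ : 0 < γ) (x y : L k Γ) :
    sigma ρ hγ (x * y) = sigma ρ hγ x * sigma ρ hγ y := by
  have hrhs : sigma ρ hγ x * sigma ρ hγ y =
      (HahnSeries.SummableFamily.smul (Fam ρ hγ x) (Fam ρ hγ y)).hsum := by
    rw [HahnSeries.SummableFamily.smul_hsum, HahnSeries.of_symm_smul_of_eq_mul]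
    rfl
  rw [hrhs]
  apply HahnSeries.coeff_injective; funext g
  rw [HahnSeries.SummableFamily.coeff_hsum, sigma_coeff]
  have happ : ∀ p : ℕ × ℕ,
      HahnSeries.SummableFamily.smul (Fam ρ hγ x) (Fam ρ hγ y) p =
        HahnSeries.single ((p.1 + p.2) • γ) (1 : HahnSeries ℚ k) *
          (Phi ρ p.1 x * Phi ρ p.2 y) := by
    intro p
    rw [HahnSeries.SummableFamily.smul_toFun, HahnSeries.of_symm_smul_of_eq_mul,
      Fam_apply, Fam_apply]
    rw [show ((p.1 + p.2) • γ) = p.1 • γ + p.2 • γ from add_nsmul γ p.1 p.2]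
    rw [show (HahnSeries.single (p.1 • γ + p.2 • γ)) (1 : HahnSeries ℚ k) =
      HahnSeries.single (p.1 • γ) (1 : HahnSeries ℚ k) *
        HahnSeries.single (p.2 • γ) (1 : HahnSeries ℚ k) by
      rw [HahnSeries.single_mul_single, one_mul]]
    ring
  set f : ℕ × ℕ → HahnSeries ℚ k :=
    fun p => (Phi ρ p.1 x * Phi ρ p.2 y).coeff (g - (p.1 + p.2) • γ) with hfdef
  have hf : (Function.support f).Finite := by
    refine (pair_finite (finite_nsmul_mem hγ (x.isPWO_support.add y.isPWO_support) g)).subset ?_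
    intro p hp
    simp only [Function.mem_support, hfdef] at hp
    have h1 : g - (p.1 + p.2) • γ ∈ (Phi ρ p.1 x * Phi ρ p.2 y).support := hp
    have h2 := HahnSeries.support_mul_subset
      (x := Phi ρ p.1 x) (y := Phi ρ p.2 y) h1
    exact Set.add_subset_add (Phi_support_subset ρ p.1 x) (Phi_support_subset ρ p.2 y) h2
  have hco : ∑ᶠ p : ℕ × ℕ,
      (HahnSeries.SummableFamily.smul (Fam ρ hγ x) (Fam ρ hγ y) p).coeff g =
      ∑ᶠ p : ℕ × ℕ, f p :=
    finsum_congr fun p => by rw [happ p, singleShift_coeff]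
  rw [hco, diag_finsum f hf]
  refine finsum_congr fun N => ?_
  have hterm : ∀ i ∈ Finset.range (N + 1), f (i, N - i) =
      (Phi ρ i x * Phi ρ (N - i) y).coeff (g - N • γ) := by
    intro i hi
    simp only [hfdef]
    rw [Nat.add_sub_cancel' (Nat.lt_succ_iff.mp (Finset.mem_range.mp hi))]
  rw [Finset.sum_congr rfl hterm, ← coeff_sum, ← Phi_mul]
  rfl

lemma sigma_comp (ρ ρ' : k) {γ : Γ} (hγ : 0 < γ) (x : L k Γ) :
    sigma ρ hγ (sigma ρ' hγ x) = sigma (ρ + ρ') hγ x := by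
  apply HahnSeries.coeff_injective; funext g
  rw [sigma_coeff, sigma_coeff]
  set F : ℕ × ℕ → HahnSeries ℚ k :=
    fun p => phi ρ p.1 (phi ρ' p.2 (x.coeff (g - (p.1 + p.2) • γ))) with hFdef
  have hF : (Function.support F).Finite := by
    refine (pair_finite (finite_nsmul_mem hγ x.isPWO_support g)).subset ?_
    intro p hp
    simp only [Function.mem_support, hFdef] at hp
    have h1 : x.coeff (g - (p.1 + p.2) • γ) ≠ 0 := by
      intro h; rw [h, phi_zero, phi_zero] at hp; exact hp rfl
    exact h1
  have hinner : ∀ n : ℕ, phi ρ n ((sigma ρ' hγ x).coeff (g - n • γ)) =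
      ∑ᶠ m : ℕ, F (n, m) := by
    intro n
    rw [sigma_coeff]
    have hmap := AddMonoidHom.map_finsum (phiHom ρ n)
      (sigma_co_support_finite ρ' hγ x (g - n • γ))
    rw [show phi ρ n (∑ᶠ (m : ℕ), phi ρ' m (x.coeff (g - n • γ - m • γ))) =
      ∑ᶠ (m : ℕ), phi ρ n (phi ρ' m (x.coeff (g - n • γ - m • γ))) from hmap]
    refine finsum_congr fun m => ?_
    simp only [phiHom_apply, hFdef]
    congr 2
    rw [add_nsmul, sub_sub]
  rw [finsum_congr hinner, ← finsum_curry F hF, diag_finsum F hF]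
  refine finsum_congr fun N => ?_
  have hterm : ∀ i ∈ Finset.range (N + 1), F (i, N - i) =
      phi ρ i (phi ρ' (N - i) (x.coeff (g - N • γ))) := by
    intro i hi
    simp only [hFdef]
    rw [Nat.add_sub_cancel' (Nat.lt_succ_iff.mp (Finset.mem_range.mp hi))]
  rw [Finset.sum_congr rfl hterm, phi_sum_comp]

end Stmt3Aux

namespace Stmt3Aux

variable {k : Type*} [Field k] [CharZero k] {Γ : Type*} [AddCommGroup Γ] [LinearOrder Γ] [IsOrderedAddMonoid Γ]

open Classical in
/-- The exponential series `exp (q ρ X^γ)`. -/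
noncomputable def Efun (ρ : k) {γ : Γ} (hγ : 0 < γ) (q : ℚ) : L k Γ where
  coeff g := if h : ∃ n : ℕ, g = n • γ then HahnSeries.single (0 : ℚ) (cc ρ h.choose q) else 0
  isPWO_support' := (isPWO_range_nsmul hγ).mono (fun g hg => by
    simp only [Function.mem_support] at hg
    by_cases h : ∃ n : ℕ, g = n • γ
    · obtain ⟨n, rfl⟩ := h
      exact Set.mem_range_self n
    · rw [dif_neg h] at hg
      exact absurd rfl hg)

open Classical in
lemma Efun_coeff_def (ρ : k) {γ : Γ} (hγ : 0 < γ) (q : ℚ) (g : Γ) :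
    (Efun ρ hγ q).coeff g = if h : ∃ n : ℕ, g = n • γ then
      HahnSeries.single (0 : ℚ) (cc ρ h.choose q) else 0 := rfl

lemma Efun_coeff_nsmul (ρ : k) {γ : Γ} (hγ : 0 < γ) (q : ℚ) (n : ℕ) :
    (Efun ρ hγ q).coeff (n • γ) = HahnSeries.single (0 : ℚ) (cc ρ n q) := by
  have h : ∃ m : ℕ, n • γ = m • γ := ⟨n, rfl⟩
  rw [Efun_coeff_def, dif_pos h]
  have hc : h.choose = n := (nsmul_strictMono hγ).injective h.choose_spec.symm
  rw [hc]

lemma Efun_coeff_zero (ρ : k) {γ : Γ} (hγ : 0 < γ) (q : ℚ) (g : Γ)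
    (hg : ¬ ∃ n : ℕ, g = n • γ) : (Efun ρ hγ q).coeff g = 0 := by
  rw [Efun_coeff_def, dif_neg hg]

lemma sigma_single (ρ : k) {γ : Γ} (hγ : 0 < γ) (a : k) (q : ℚ) (g : Γ) :
    sigma ρ hγ (HahnSeries.single g (HahnSeries.single q a)) =
      HahnSeries.single g (HahnSeries.single q a) * Efun ρ hγ q := by
  apply HahnSeries.coeff_injective; funext g'
  rw [sigma_coeff]
  have hrhs : (HahnSeries.single g (HahnSeries.single q a) * Efun ρ hγ q).coeff g' =
      HahnSeries.single q a * (Efun ρ hγ q).coeff (g' - g) := by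
    have h := HahnSeries.coeff_single_mul_add (r := HahnSeries.single q a)
      (x := Efun ρ hγ q) (a := g' - g) (b := g)
    rw [sub_add_cancel] at h
    exact h
  rw [hrhs]
  by_cases hex : ∃ n : ℕ, g' = g + n • γ
  · obtain ⟨n, rfl⟩ := hex
    rw [finsum_eq_single _ n (fun m hm => ?_)]
    · rw [show g + n • γ - n • γ = g from add_sub_cancel_right g (n • γ),
        HahnSeries.coeff_single_same, phi_single,
        show g + n • γ - g = n • γ from add_sub_cancel_left g (n • γ),
        Efun_coeff_nsmul, HahnSeries.single_mul_single, add_zero, mul_comm a (cc ρ n q)]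
    · have hne : g + n • γ - m • γ ≠ g := by
        intro h
        apply hm
        have : m • γ = n • γ := by
          have := sub_eq_iff_eq_add.mp h
          -- this : g + n • γ = g + m • γ
          exact ((add_right_inj g).mp this).symm
        exact (nsmul_strictMono hγ).injective this
      rw [HahnSeries.coeff_single_of_ne hne, phi_zero]
  · have h1 : ¬ ∃ n : ℕ, g' - g = n • γ := by
      intro ⟨n, hn⟩
      exact hex ⟨n, by rw [← hn]; abel⟩
    rw [Efun_coeff_zero ρ hγ q _ h1, mul_zero]
    refine finsum_eq_zero_of_forall_eq_zero fun n => ?_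
    have hne : g' - n • γ ≠ g := by
      intro h
      exact hex ⟨n, sub_eq_iff_eq_add.mp h⟩
    rw [HahnSeries.coeff_single_of_ne hne, phi_zero]

end Stmt3Aux

namespace Stmt3Aux

variable {k : Type*} [Field k] [CharZero k] {Γ : Type*} [AddCommGroup Γ] [LinearOrder Γ] [IsOrderedAddMonoid Γ]

lemma sigma_orderTop (ρ : k) {γ : Γ} (hγ : 0 < γ) (x : L k Γ) :
    x.orderTop + (γ : WithTop Γ) ≤ (x - sigma ρ hγ x).orderTop := by
  set d := x - sigma ρ hγ x with hd
  by_cases hd0 : d = 0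
  · rw [hd0, HahnSeries.orderTop_zero]
    exact le_top
  · have hne : d.coeff d.order ≠ 0 := mt HahnSeries.coeff_order_eq_zero.1 hd0
    set g := d.order with hgdef
    have hcoeff : d.coeff g = x.coeff g - ∑ᶠ n : ℕ, phi ρ n (x.coeff (g - n • γ)) := by
      rw [hd, HahnSeries.coeff_sub, sigma_coeff]
    have hex : ∃ n : ℕ, n ≠ 0 ∧ x.coeff (g - n • γ) ≠ 0 := by
      by_contra hall
      push_neg at hall
      apply hne
      rw [hcoeff, finsum_eq_single _ 0 (fun n hn => by rw [hall n hn, phi_zero]),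
        zero_nsmul, sub_zero, phi_zero_idx, sub_self]
    obtain ⟨n, hn0, hxg⟩ := hex
    have h1 : x.orderTop ≤ ((g - n • γ : Γ) : WithTop Γ) :=
      HahnSeries.orderTop_le_of_coeff_ne_zero hxg
    have h2 : (γ : Γ) ≤ n • γ := by
      calc γ = 1 • γ := (one_nsmul γ).symm
        _ ≤ n • γ := (nsmul_strictMono hγ).monotone (Nat.one_le_iff_ne_zero.2 hn0)
    have h3 : g - n • γ + γ ≤ g := by
      rw [sub_add_eq_add_sub, sub_le_iff_le_add]
      exact add_le_add_right h2 g
    have hdord : (d.orderTop : WithTop Γ) = (g : WithTop Γ) :=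
      ((HahnSeries.order_eq_orderTop_of_ne_zero hd0).symm : d.orderTop = (d.order : WithTop Γ))
    calc x.orderTop + (γ : WithTop Γ) ≤ ((g - n • γ : Γ) : WithTop Γ) + (γ : WithTop Γ) :=
          add_le_add_left h1 _
      _ = ((g - n • γ + γ : Γ) : WithTop Γ) := (WithTop.coe_add _ _).symm
      _ ≤ (g : WithTop Γ) := WithTop.coe_le_coe.2 h3
      _ = d.orderTop := hdord.symm

end Stmt3Aux



/-- Let `k` be a field of characteristic `0`, `Γ` a linearly ordered abelian group,
`γ > 0` in `Γ`, and `ρ ∈ k`. In the Hahn series field `L = l((X^Γ))` over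
`l = k((T^ℚ))`, there is a ring automorphism `σ` acting on monomials by
`σ(a T^q X^g) = a T^q X^g · exp(q ρ X^γ)` (where `exp(q ρ X^γ)` is the series `E q`
with coefficient `(qρ)^n/n!` at `nγ` and `0` elsewhere), and it satisfies
`v(x − σ(x)) ≥ v(x) + γ` for every `x` with `v(x) ≥ 0`, where `v` is the `X`-adic
valuation (`HahnSeries.orderTop`). -/
theorem stmt3 {k Γ : Type*} [Field k] [CharZero k] [AddCommGroup Γ] [LinearOrder Γ] [IsOrderedAddMonoid Γ]
    (γ : Γ) (hγ : 0 < γ) (ρ : k) :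
    ∃ (σ : HahnSeries Γ (HahnSeries ℚ k) ≃+* HahnSeries Γ (HahnSeries ℚ k))
      (E : ℚ → HahnSeries Γ (HahnSeries ℚ k)),
      (∀ (q : ℚ) (n : ℕ),
        (E q).coeff (n • γ) = HahnSeries.single (0 : ℚ) ((q • ρ) ^ n / (n.factorial : k))) ∧
      (∀ (q : ℚ) (g : Γ), (¬ ∃ n : ℕ, g = n • γ) → (E q).coeff g = 0) ∧
      (∀ (a : k) (q : ℚ) (g : Γ),
        σ (HahnSeries.single g (HahnSeries.single q a)) =
          HahnSeries.single g (HahnSeries.single q a) * E q) ∧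
      (∀ x : HahnSeries Γ (HahnSeries ℚ k),
        0 ≤ x.orderTop → x.orderTop + (γ : WithTop Γ) ≤ (x - σ x).orderTop) := by
  classical
  refine ⟨{ toFun := Stmt3Aux.sigma ρ hγ
            invFun := Stmt3Aux.sigma (-ρ) hγ
            left_inv := fun x => by
              rw [Stmt3Aux.sigma_comp (-ρ) ρ hγ x, neg_add_cancel, Stmt3Aux.sigma_zero_rho]
            right_inv := fun x => by
              rw [Stmt3Aux.sigma_comp ρ (-ρ) hγ x, add_neg_cancel, Stmt3Aux.sigma_zero_rho]
            map_mul' := Stmt3Aux.sigma_mul ρ hγ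
            map_add' := Stmt3Aux.sigma_add ρ hγ },
         fun q => Stmt3Aux.Efun ρ hγ q, ?_, ?_, ?_, ?_⟩
  · intro q n
    simpa [Stmt3Aux.cc] using Stmt3Aux.Efun_coeff_nsmul ρ hγ q n
  · intro q g hg
    exact Stmt3Aux.Efun_coeff_zero ρ hγ q g hg
  · intro a q g
    exact Stmt3Aux.sigma_single ρ hγ a q g
  · intro x _
    exact Stmt3Aux.sigma_orderTop ρ hγ x
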